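/- Let 𝔱 be a Euclidean space with positive definite form h, let c be a positive semi-definite symmetric form, and suppose Σ_α α ⊗ α = -2c where the sum is over a finite set of linear functionals α paired with complex values e^α(f) of modulus 1 (roots evaluated at a unitary torus element f). If h > c (i.e. h - c is positive definite), s is sufficiently small, t ∈ (-1, 0], and H_V is any fixed symmetric bilinear form, then the complex bilinear form H = (h+c) + s·H_V + t·Σ_α (e^α(f)/(1 + t·e^α(f)))·α⊗α is non-degenerate. -/

import Mathlib

theorem reBound (t : ℝ) (z : ℂ) (ht1 : -1 < t) (ht0 : t ≤ 0) (hz : ‖z‖ = 1) :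
    (1 + (t:ℂ) * z) ≠ 0 ∧ -1 ≤ (z / (1 + (t:ℂ) * z)).re := by
  have hd : (1 + (t:ℂ) * z) ≠ 0 := by
    intro h0
    have h1 : (t:ℂ) * z = -1 := by linear_combination h0
    have : ‖(t:ℂ) * z‖ = |t| := by simp [hz]
    rw [h1] at this
    simp at this
    rw [abs_of_nonpos ht0] at this
    linarith
  refine ⟨hd, ?_⟩
  have hN : 0 < Complex.normSq (1 + (t:ℂ)*z) := Complex.normSq_pos.2 hd
  have hz2 : z.re^2 + z.im^2 = 1 := by
    have := Complex.sq_norm z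
    rw [hz, Complex.normSq_apply] at this
    nlinarith
  have hr1 : z.re ≤ 1 := by nlinarith [sq_nonneg z.im]
  have hr2 : -1 ≤ z.re := by nlinarith [sq_nonneg z.im]
  rw [Complex.div_re, ← add_div, le_div_iff₀ hN]
  simp only [Complex.normSq_apply, Complex.add_re, Complex.add_im, Complex.mul_re,
    Complex.mul_im, Complex.ofReal_re, Complex.ofReal_im, Complex.one_re, Complex.one_im]
  nlinarith [mul_nonneg (mul_nonneg (neg_nonneg.2 ht0) (by linarith : (0:ℝ) ≤ 1 - t))
      (by linarith : (0:ℝ) ≤ 1 - z.re),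
    mul_nonneg (mul_nonneg (by linarith : (0:ℝ) ≤ 1 + t) (by linarith : (0:ℝ) ≤ 2 + t))
      (by linarith : (0:ℝ) ≤ 1 + z.re)]


theorem contDiag {l : ℕ} (B : EuclideanSpace ℝ (Fin l) →ₗ[ℝ] EuclideanSpace ℝ (Fin l) →ₗ[ℝ] ℝ) :
    Continuous fun x => B x x := by
  let f : EuclideanSpace ℝ (Fin l) →ₗ[ℝ] (EuclideanSpace ℝ (Fin l) →L[ℝ] ℝ) :=
    { toFun := fun x => LinearMap.toContinuousLinearMap (B x)
      map_add' := by intro x y; ext v; simp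
      map_smul' := by intro r x; ext v; simp }
  have hf : Continuous f := f.continuous_of_finiteDimensional
  exact isBoundedBilinearMap_apply.continuous.comp (hf.prodMk continuous_id)

theorem smallPert {l : ℕ}
    (h c HV : EuclideanSpace ℝ (Fin l) →ₗ[ℝ] EuclideanSpace ℝ (Fin l) →ₗ[ℝ] ℝ)
    (hposdef : ∀ x, x ≠ 0 → 0 < h x x - c x x) :
    ∃ ε > 0, ∀ s : ℝ, |s| < ε → ∀ x, x ≠ 0 → 0 < h x x - c x x + s * HV x x := by
  by_cases hl : ∀ x : EuclideanSpace ℝ (Fin l), x = 0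
  · exact ⟨1, one_pos, fun s _ x hx => absurd (hl x) hx⟩
  push_neg at hl
  obtain ⟨x₀, hx₀⟩ := hl
  have hS : (Metric.sphere (0 : EuclideanSpace ℝ (Fin l)) 1).Nonempty :=
    ⟨(‖x₀‖⁻¹ : ℝ) • x₀, by
      simp [norm_smul, norm_ne_zero_iff.2 hx₀, abs_of_nonneg (inv_nonneg.2 (norm_nonneg x₀)),
        inv_mul_cancel₀ (norm_ne_zero_iff.2 hx₀)]⟩
  have hcomp : IsCompact (Metric.sphere (0 : EuclideanSpace ℝ (Fin l)) 1) := isCompact_sphere _ _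
  have hq : Continuous fun x => h x x - c x x := (contDiag h).sub (contDiag c)
  have hv : Continuous fun x : EuclideanSpace ℝ (Fin l) => |HV x x| := (contDiag HV).abs
  obtain ⟨u, huS, hu⟩ := hcomp.exists_isMinOn hS hq.continuousOn
  obtain ⟨w, hwS, hw⟩ := hcomp.exists_isMaxOn hS hv.continuousOn
  set δ := h u u - c u u with hδ
  set M := |HV w w| with hM
  have hune : u ≠ 0 := by
    intro h0; rw [h0] at huS; simp at huS
  have hδpos : 0 < δ := hposdef u hune
  have hMnn : 0 ≤ M := abs_nonneg _
  refine ⟨δ / (M + 1), div_pos hδpos (by linarith), fun s hs x hx => ?_⟩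
  have hnx : (0:ℝ) < ‖x‖ := norm_pos_iff.2 hx
  set y := (‖x‖⁻¹ : ℝ) • x with hy
  have hyS : y ∈ Metric.sphere (0 : EuclideanSpace ℝ (Fin l)) 1 := by
    simp [hy, norm_smul, abs_of_nonneg (inv_nonneg.2 (norm_nonneg x)),
      inv_mul_cancel₀ (ne_of_gt hnx)]
  have key : ∀ (B : EuclideanSpace ℝ (Fin l) →ₗ[ℝ] EuclideanSpace ℝ (Fin l) →ₗ[ℝ] ℝ),
      B x x = ‖x‖^2 * B y y := by
    intro B
    simp [hy, map_smul, smul_smul]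
    field_simp
  rw [key h, key c, key HV]
  have h1 : δ ≤ h y y - c y y := isMinOn_iff.1 hu y hyS
  have h2 : |HV y y| ≤ M := isMaxOn_iff.1 hw y hyS
  have h3 : |s * HV y y| < δ := by
    rw [abs_mul]
    calc |s| * |HV y y| ≤ |s| * M := mul_le_mul_of_nonneg_left h2 (abs_nonneg s)
      _ ≤ δ / (M+1) * M :=
          mul_le_mul_of_nonneg_right (le_of_lt hs) hMnn
      _ < δ := by
          rw [div_mul_eq_mul_div, div_lt_iff₀ (by linarith)]
          nlinarith
  have h4 := abs_lt.1 h3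
  have hpar : 0 < (h y y - c y y) + s * HV y y := by linarith [h4.1]
  nlinarith [mul_pos (pow_pos hnx 2) hpar]



/- STATEMENT 8: 𝔱 a Euclidean space, h, c, H_V symmetric bilinear forms with
h - c positive definite ("h > c") and c positive semi-definite, and a finite
family of (imaginary) root functionals α_j with values e^{α_j}(f) = z_j of
modulus 1, obeying the convention Σ_j α_j ⊗ α_j = -2c, i.e. the real rank-one
forms a_j = -i·α_j satisfy Σ_j a_j ⊗ a_j = 2c.  Then for sufficiently small s
and every t ∈ (-1, 0] the complex bilinear form
  H = (h + c) + s·H_V + t·Σ_j (z_j/(1 + t z_j))·α_j ⊗ α_j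
    = (h + c) + s·H_V - t·Σ_j (z_j/(1 + t z_j))·a_j ⊗ a_j
is non-degenerate. -/

theorem stmt8 (l m : ℕ)
    (h c HV : EuclideanSpace ℝ (Fin l) →ₗ[ℝ] EuclideanSpace ℝ (Fin l) →ₗ[ℝ] ℝ)
    (hhs : ∀ x y, h x y = h y x) (hcs : ∀ x y, c x y = c y x)
    (hHVs : ∀ x y, HV x y = HV y x)
    (hposdef : ∀ x, x ≠ 0 → 0 < h x x - c x x) (hcpsd : ∀ x, 0 ≤ c x x)
    (a : Fin m → (EuclideanSpace ℝ (Fin l) →ₗ[ℝ] ℝ)) (z : Fin m → ℂ)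
    (hz : ∀ j, ‖z j‖ = 1)
    (hsum : ∀ x y, ∑ j, a j x * a j y = 2 * c x y) :
    ∃ ε > 0, ∀ s : ℝ, |s| < ε → ∀ t : ℝ, -1 < t → t ≤ 0 →
      ∀ ξ, (∀ η, ((h ξ η + c ξ η + s * HV ξ η : ℝ) : ℂ)
          - (t : ℂ) * ∑ j, (z j / (1 + (t : ℂ) * z j)) * ((a j ξ : ℝ) : ℂ) * ((a j η : ℝ) : ℂ)
            = 0) → ξ = 0 := by
  obtain ⟨ε, hε, hkey⟩ := smallPert h c HV hposdef
  refine ⟨ε, hε, fun s hs t ht1 ht0 ξ hξ => ?_⟩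
  by_contra hne
  have heq := hξ ξ
  have hre := congrArg Complex.re heq
  simp only [Complex.sub_re, Complex.mul_re, Complex.ofReal_re, Complex.ofReal_im,
    Complex.re_sum, Complex.im_sum, Complex.mul_im, Complex.zero_re, zero_mul, mul_zero,
    sub_zero, zero_sub, add_zero, zero_add, neg_zero] at hre
  set W : Fin m → ℝ := fun j => (z j / (1 + (t:ℂ) * z j)).re with hWdef
  have hW : ∀ j, -1 ≤ W j := fun j => (reBound t (z j) ht1 ht0 (hz j)).2
  have hsumsq := hsum ξ ξ
  have hS : -(2 * c ξ ξ) ≤ ∑ j, W j * a j ξ * a j ξ := by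
    rw [← hsumsq, ← Finset.sum_neg_distrib]
    refine Finset.sum_le_sum fun j _ => ?_
    nlinarith [mul_self_nonneg (a j ξ), hW j]
  have h5 : t * (∑ j, W j * a j ξ * a j ξ) ≤ t * (-(2 * c ξ ξ)) :=
    mul_le_mul_of_nonpos_left hS ht0
  have h6 : t * (-(2 * c ξ ξ)) ≤ 2 * c ξ ξ := by nlinarith [hcpsd ξ]
  have h7 := hkey s hs ξ hne
  -- hre should say h ξ ξ + c ξ ξ + s * HV ξ ξ - t * ∑ ... = 0
  nlinarith [hre, h5, h6, h7]
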